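/- Let 𝕂 be a field with a non-discrete Hausdorff topology in which 𝕂ˣ is dense, F a Hausdorff topological 𝕂-vector space, I ⊆ 𝕂 an open zero-neighbourhood, k ∈ ℕ, p ≤ k, and f : I → F of the form f(t) = Σ_{j=0}^k t^j • a_j + t^k • R(t) with a_j ∈ F and R : I → F continuous with R(0) = 0. If f is homogeneous of degree p in the sense that f(s•t) = s^p • f(t) whenever t ∈ I, s ∈ 𝕂, s•t ∈ I, then R = 0, a_j = 0 for all j ≠ p, and f(t) = t^p • a_p for all t ∈ I. -/

import Mathlib

section Aux

variable {𝕂 : Type*} [Field 𝕂] [TopologicalSpace 𝕂] [IsTopologicalRing 𝕂]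
  {F : Type*} [AddCommGroup F] [Module 𝕂 F] [TopologicalSpace F]
  [IsTopologicalAddGroup F] [ContinuousSMul 𝕂 F] [T2Space F]

/-- A continuous function on an open set vanishing off `0` vanishes everywhere, since
nonzero scalars are dense. -/
lemma aux_ext (hK : Dense {t : 𝕂 | t ≠ 0}) {J : Set 𝕂} (hJ : IsOpen J)
    {g : 𝕂 → F} (hg : ContinuousOn g J) (h : ∀ s ∈ J, s ≠ 0 → g s = 0) :
    ∀ s ∈ J, g s = 0 := by
  intro s hs
  rcases eq_or_ne s 0 with rfl | hne
  · have hcl : (0 : 𝕂) ∈ closure (J ∩ {t : 𝕂 | t ≠ 0}) :=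
      hK.open_subset_closure_inter hJ hs
    have hnb : (nhdsWithin (0 : 𝕂) (J ∩ {t : 𝕂 | t ≠ 0})).NeBot :=
      mem_closure_iff_nhdsWithin_neBot.mp hcl
    have h1 : Filter.Tendsto g (nhdsWithin (0 : 𝕂) (J ∩ {t : 𝕂 | t ≠ 0})) (nhds (g 0)) :=
      (hg 0 hs).mono Set.inter_subset_left
    have h2 : Filter.Tendsto g (nhdsWithin (0 : 𝕂) (J ∩ {t : 𝕂 | t ≠ 0})) (nhds 0) := by
      have hev : ∀ᶠ x in nhdsWithin (0 : 𝕂) (J ∩ {t : 𝕂 | t ≠ 0}), (0 : F) = g x :=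
        Filter.eventually_of_mem self_mem_nhdsWithin fun x hx => (h x hx.1 hx.2).symm
      exact Filter.Tendsto.congr' hev tendsto_const_nhds
    exact tendsto_nhds_unique h1 h2
  · exact h s hs hne

/-- Uniqueness of Taylor-type expansions: if an expansion of order `k` vanishes identically
on an open zero-neighbourhood, all coefficients and the remainder vanish. -/
lemma aux_unique (hK : Dense {t : 𝕂 | t ≠ 0}) {J : Set 𝕂} (hJ : IsOpen J) (h0 : (0 : 𝕂) ∈ J)
    (k : ℕ) (b : ℕ → F) (r : 𝕂 → F) (hr : ContinuousOn r J) (hr0 : r 0 = 0)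
    (h : ∀ s ∈ J, (∑ j ∈ Finset.range (k + 1), s ^ j • b j) + s ^ k • r s = 0) :
    (∀ j ≤ k, b j = 0) ∧ ∀ s ∈ J, r s = 0 := by
  induction k generalizing b with
  | zero =>
    have hb : b 0 = 0 := by
      have := h 0 h0
      simpa [hr0] using this
    refine ⟨fun j hj => by simpa [Nat.le_zero.mp hj] using hb, fun s hs => ?_⟩
    have := h s hs
    simpa [hb] using this
  | succ k ih =>
    have hb0 : b 0 = 0 := by
      have := h 0 h0
      simpa [Finset.sum_range_succ', hr0, pow_succ] using this
    set g : 𝕂 → F := fun s => (∑ j ∈ Finset.range (k + 1), s ^ j • b (j + 1)) + s ^ k • r s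
      with hg_def
    have hgcont : ContinuousOn g J := by
      apply ContinuousOn.add
      · exact (continuous_finset_sum _ fun j _ =>
          (continuous_pow j).smul continuous_const).continuousOn
      · exact ((continuous_pow k).continuousOn).smul hr
    have hgz : ∀ s ∈ J, s ≠ 0 → g s = 0 := by
      intro s hs hne
      have hsum : s • g s = 0 := by
        have hh := h s hs
        have heq : (∑ j ∈ Finset.range (k + 1 + 1), s ^ j • b j) + s ^ (k + 1) • r s
            = s • g s + b 0 := by
          rw [Finset.sum_range_succ']
          simp only [hg_def, smul_add, Finset.smul_sum, pow_zero, one_smul, pow_succ',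
            mul_smul]
          abel
        rw [heq, hb0, add_zero] at hh
        exact hh
      have := congrArg (fun x => s⁻¹ • x) hsum
      simpa [inv_smul_smul₀ hne] using this
    have hgz' : ∀ s ∈ J, g s = 0 := aux_ext hK hJ hgcont hgz
    obtain ⟨hb, hrz⟩ := ih (fun j => b (j + 1)) hgz'
    refine ⟨fun j hj => ?_, hrz⟩
    cases j with
    | zero => exact hb0
    | succ j => exact hb j (Nat.succ_le_succ_iff.mp hj)

end Aux

/-- Homogeneity kills all expansion coefficients except the one of the right degree
(Lemma 5.2, final part, of Bertram–Glöckner–Neeb): if `f(t) = Σ_{j=0}^k t^j • a_j + t^k • R(t)`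
on an open zero-neighbourhood `I`, with `R` continuous, `R(0) = 0`, and `f` is homogeneous of
degree `p ≤ k`, then `R = 0` on `I`, `a_j = 0` for `j ≠ p`, and `f(t) = t^p • a_p` on `I`. -/
theorem stmt_7 (𝕂 : Type*) [Field 𝕂] [TopologicalSpace 𝕂] [IsTopologicalRing 𝕂] [T2Space 𝕂]
    (hK : Dense {t : 𝕂 | t ≠ 0})
    (F : Type*) [AddCommGroup F] [Module 𝕂 F] [TopologicalSpace F]
    [IsTopologicalAddGroup F] [ContinuousSMul 𝕂 F] [T2Space F]
    (I : Set 𝕂) (hI : IsOpen I) (h0 : (0 : 𝕂) ∈ I) (k p : ℕ) (hpk : p ≤ k)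
    (a : ℕ → F) (R : 𝕂 → F) (hR : ContinuousOn R I) (hR0 : R 0 = 0)
    (f : 𝕂 → F)
    (hexp : ∀ t ∈ I, f t = (∑ j ∈ Finset.range (k + 1), t ^ j • a j) + t ^ k • R t)
    (hhom : ∀ t ∈ I, ∀ s : 𝕂, s * t ∈ I → f (s * t) = s ^ p • f t) :
    (∀ t ∈ I, R t = 0) ∧ (∀ j ≤ k, j ≠ p → a j = 0) ∧ ∀ t ∈ I, f t = t ^ p • a p := by
  have key : ∀ t ∈ I,
      (∀ j ≤ k, t ^ j • a j = if j = p then f t else 0) ∧ t ^ k • R t = 0 := by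
    intro t ht
    set J : Set 𝕂 := {s : 𝕂 | s * t ∈ I} with hJ_def
    have hJopen : IsOpen J := hI.preimage (continuous_mul_right t)
    have hJ0 : (0 : 𝕂) ∈ J := by simp [hJ_def, h0]
    set b : ℕ → F := fun j => t ^ j • a j - (if j = p then f t else 0) with hb_def
    set r : 𝕂 → F := fun s => t ^ k • R (s * t) with hr_def
    have hrc : ContinuousOn r J := by
      have hc : ContinuousOn (fun s : 𝕂 => R (s * t)) J :=
        hR.comp (continuous_mul_right t).continuousOn (fun s hs => hs)
      exact hc.const_smul (t ^ k)
    have hr0 : r 0 = 0 := by simp [hr_def, hR0]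
    have hexp0 : ∀ s ∈ J, (∑ j ∈ Finset.range (k + 1), s ^ j • b j) + s ^ k • r s = 0 := by
      intro s hs
      have hst : s * t ∈ I := hs
      have h1 := hexp (s * t) hst
      have h2 := hhom t ht s hst
      have hsplit : (∑ j ∈ Finset.range (k + 1), s ^ j • b j)
          = (∑ j ∈ Finset.range (k + 1), (s * t) ^ j • a j) - s ^ p • f t := by
        have : ∀ j ∈ Finset.range (k + 1), s ^ j • b j
            = (s * t) ^ j • a j - (if j = p then s ^ p • f t else 0) := by
          intro j _
          rw [hb_def, smul_sub, mul_pow, mul_smul]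
          congr 1
          by_cases hj : j = p <;> simp [hj]
        rw [Finset.sum_congr rfl this, Finset.sum_sub_distrib,
          Finset.sum_ite_eq' (Finset.range (k + 1)) p (fun _ => s ^ p • f t),
          if_pos (Finset.mem_range.mpr (Nat.lt_succ_of_le hpk))]
      have hrem : s ^ k • r s = (s * t) ^ k • R (s * t) := by
        rw [hr_def, mul_pow, mul_smul]
      rw [hsplit, hrem]
      rw [h2] at h1
      rw [sub_add_eq_add_sub, ← h1, sub_self]
    obtain ⟨hb, hrz⟩ := aux_unique hK hJopen hJ0 k b r hrc hr0 hexp0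
    constructor
    · intro j hj
      have := hb j hj
      rw [hb_def] at this
      exact sub_eq_zero.mp this
    · have h1J : (1 : 𝕂) ∈ J := by simpa [hJ_def] using ht
      have := hrz 1 h1J
      simpa [hr_def] using this
  obtain ⟨t0, ht0ne, ht0I⟩ := hK.exists_mem_open hI ⟨0, h0⟩
  refine ⟨?_, ?_, ?_⟩
  · intro t ht
    rcases eq_or_ne t 0 with rfl | hne
    · exact hR0
    · have hk := (key t ht).2
      have := congrArg (fun x => (t ^ k)⁻¹ • x) hk
      simpa [inv_smul_smul₀ (pow_ne_zero k hne)] using this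
  · intro j hj hjp
    have hb := (key t0 ht0I).1 j hj
    rw [if_neg hjp] at hb
    have := congrArg (fun x => (t0 ^ j)⁻¹ • x) hb
    simpa [inv_smul_smul₀ (pow_ne_zero j ht0ne)] using this
  · intro t ht
    have hb := (key t ht).1 p hpk
    rw [if_pos rfl] at hb
    exact hb.symm
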